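/- Let S be a finite nonempty type and let P and Q be probability mass functions on S with P(s) > 0 and Q(s) > 0 for all s. If a function g : S → ℝ satisfies ∑_{s} P(s)·g(s) − ∑_{s} Q(s)·exp(g(s) − 1) = KL(P‖Q), then g(s) = 1 + log(P(s)/Q(s)) for every s ∈ S; i.e., the maximizer of the variational objective E_P[g] − E_Q[e^{g−1}] is unique and equals 1 + log of the density ratio. -/

import Mathlib

/-- if a function `g` attains equality in the variational lower bound for the
Kullback–Leibler divergence, i.e. `E_P[g] − E_Q[e^{g−1}] = KL(P‖Q)`, then
`g(s) = 1 + log(P(s)/Q(s))` for every `s`: the maximizer of the variational objective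
is unique and equals `1 +` the log density ratio. -/
theorem variational_bound_maximizer_unique {S : Type*} [Fintype S] [Nonempty S]
    (P Q : S → ℝ)
    (hP0 : ∀ s, 0 < P s) (hP1 : ∑ s, P s = 1)
    (hQ0 : ∀ s, 0 < Q s) (hQ1 : ∑ s, Q s = 1)
    (g : S → ℝ)
    (hg : (∑ s, P s * g s) - (∑ s, Q s * Real.exp (g s - 1)) =
      ∑ s, P s * Real.log (P s / Q s)) :
    ∀ s, g s = 1 + Real.log (P s / Q s) := by
  set t : S → ℝ := fun s => g s - 1 - Real.log (P s / Q s) with ht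
  have hexp : ∀ s, Q s * Real.exp (g s - 1) = P s * Real.exp (t s) := by
    intro s
    have hr : (0:ℝ) < P s / Q s := div_pos (hP0 s) (hQ0 s)
    have : Real.exp (g s - 1) = Real.exp (t s) * (P s / Q s) := by
      rw [← Real.exp_log hr, ← Real.exp_add]
      simp only [ht]
      ring_nf
    have hQP : Q s * (P s / Q s) = P s := by
      rw [mul_div_assoc', mul_comm, mul_div_assoc, div_self (hQ0 s).ne', mul_one]
    rw [this, mul_comm (Real.exp (t s)), ← mul_assoc, hQP]
  have hsum : ∑ s, P s * (t s + 1 - Real.exp (t s)) = 0 := by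
    have : ∑ s, P s * (t s + 1 - Real.exp (t s)) =
        ((∑ s, P s * g s) - (∑ s, Q s * Real.exp (g s - 1))) -
          ∑ s, P s * Real.log (P s / Q s) := by
      rw [← Finset.sum_sub_distrib, ← Finset.sum_sub_distrib]
      apply Finset.sum_congr rfl
      intro s _
      rw [hexp s]
      ring
    rw [this, hg, sub_self]
  have hzero : ∀ s ∈ Finset.univ, P s * (t s + 1 - Real.exp (t s)) = 0 := by
    rw [← Finset.sum_eq_zero_iff_of_nonpos]
    · exact hsum
    · intro s _
      have := Real.add_one_le_exp (t s)
      nlinarith [(hP0 s).le]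
  intro s
  have h := hzero s (Finset.mem_univ s)
  have h2 : t s + 1 - Real.exp (t s) = 0 := by
    have := (hP0 s).ne'
    rcases mul_eq_zero.mp h with h' | h'
    · exact absurd h' this
    · exact h'
  have ht0 : t s = 0 := by
    by_contra hne
    have := Real.add_one_lt_exp hne
    linarith
  have := ht0
  simp only [ht] at this
  linarith
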